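/- arXiv:1806.11028 — 2 statements merged into one kernel-verified Lean document; each statement's English description precedes it below -/
import Mathlib

section
/- Let A, B ∈ Mat_n(𝕋) and w ∈ {a,b}⁺ satisfy per(A) = tr(A), per(B) = tr(B), and rk_tr(w(A,B)) = n. Then for each index i, the i-th diagonal entry of w(A,B) equals |w|_a · A_{i,i} + |w|_b · B_{i,i}, where |w|_a and |w|_b are the numbers of occurrences of the letters a and b in w. -/
attribute [local instance] Classical.propDecidable

/-- The tropical (max-plus) semiring carrier: `ℝ ∪ {−∞}`. -/
abbrev Trop : Type := WithBot ℝ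

/-- Tropical matrix multiplication: `(A ⊙ B)_{i,j} = max_k (A_{i,k} + B_{k,j})`. -/
def tmul {n m p : ℕ} (A : Matrix (Fin n) (Fin m) Trop) (B : Matrix (Fin m) (Fin p) Trop) :
    Matrix (Fin n) (Fin p) Trop :=
  fun i j => Finset.univ.sup (fun k => A i k + B k j)

/-- The tropical identity matrix. -/
def tId (n : ℕ) : Matrix (Fin n) (Fin n) Trop :=
  fun i j => if i = j then (0 : Trop) else ⊥

/-- Tropical matrix power. -/
def tPow {n : ℕ} (A : Matrix (Fin n) (Fin n) Trop) : ℕ → Matrix (Fin n) (Fin n) Trop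
  | 0 => tId n
  | t + 1 => tmul A (tPow A t)

/-- Weight of a permutation: `ω(π) = Σ_i A_{i,π(i)}`. -/
def permWeight {n : ℕ} (A : Matrix (Fin n) (Fin n) Trop) (π : Equiv.Perm (Fin n)) : Trop :=
  ∑ i, A i (π i)

/-- Tropical permanent: `per(A) = max_π ω(π)`. -/
def tPer {n : ℕ} (A : Matrix (Fin n) (Fin n) Trop) : Trop :=
  Finset.univ.sup (fun π : Equiv.Perm (Fin n) => permWeight A π)

/-- Nonsingular: exactly one permutation attains the permanent. -/
def Nonsingular {n : ℕ} (A : Matrix (Fin n) (Fin n) Trop) : Prop :=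
  ∃! π : Equiv.Perm (Fin n), permWeight A π = tPer A

/-- Tropical rank: the largest `k` such that `A` has a nonsingular `k × k` submatrix. -/
noncomputable def tropRank {n : ℕ} (A : Matrix (Fin n) (Fin n) Trop) : ℕ :=
  sSup {k : ℕ | ∃ (r : Fin k → Fin n) (c : Fin k → Fin n),
    Function.Injective r ∧ Function.Injective c ∧
    Nonsingular (fun i j => A (r i) (c j))}

/-- Factor rank: the smallest `k` such that `A = B ⊙ C` with `B` of size `n × k` and `C` of
size `k × n`. -/
noncomputable def facRank {n : ℕ} (A : Matrix (Fin n) (Fin n) Trop) : ℕ :=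
  sInf {k : ℕ | ∃ (B : Matrix (Fin n) (Fin k) Trop) (C : Matrix (Fin k) (Fin n) Trop),
    A = tmul B C}

/-- Trace: `tr(A) = Σ_i A_{i,i}` in `ℝ ∪ {−∞}`. -/
def tTrace {n : ℕ} (A : Matrix (Fin n) (Fin n) Trop) : Trop := ∑ i, A i i

/-- Evaluation of a word over the alphabet `{a, b}` (with `a = true`, `b = false`) at the
pair of tropical matrices `(A, B)`, i.e. `a ↦ A`, `b ↦ B`.  (On the empty word it returns
the identity matrix; we only use it on nonempty words.) -/
def mEval {n : ℕ} (A B : Matrix (Fin n) (Fin n) Trop) : List Bool → Matrix (Fin n) (Fin n) Trop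
  | [] => tId n
  | x :: w => tmul (if x then A else B) (mEval A B w)

/-- `lcm(1, 2, …, n)`. -/
def nbar (n : ℕ) : ℕ := (Finset.Icc 1 n).lcm id

/-- A walk on the digraph `G(A)`, given by its list of visited nodes: consecutive nodes must
be joined by an arc, i.e. have weight `≠ −∞`. -/
def IsWalk {n : ℕ} (A : Matrix (Fin n) (Fin n) Trop) (p : List (Fin n)) : Prop :=
  p.Chain' (fun i j => A i j ≠ ⊥)

/-- The weight of a walk: sum of the weights of its arcs. -/
def walkWeight {n : ℕ} (A : Matrix (Fin n) (Fin n) Trop) (p : List (Fin n)) : Trop :=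
  ((p.zip p.tail).map (fun q => A q.1 q.2)).sum

/-- The set of nodes on the cycle of the permutation `τ` containing `i`. -/
noncomputable def cycFinset {n : ℕ} (τ : Equiv.Perm (Fin n)) (i : Fin n) : Finset (Fin n) :=
  Finset.univ.filter (fun j => τ.SameCycle i j)

/-- `μ_i`: the average weight of the unique cycle of `τ` containing `i`. -/
noncomputable def mu {n : ℕ} (A : Matrix (Fin n) (Fin n) Trop) (τ : Equiv.Perm (Fin n))
    (i : Fin n) : ℝ :=
  (∑ j ∈ cycFinset τ i, WithBot.unbotD 0 (A j (τ j))) / (cycFinset τ i).card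

/-- Upper triangular tropical matrix: all entries below the diagonal are `−∞`. -/
def UpperTri {n : ℕ} (A : Matrix (Fin n) (Fin n) Trop) : Prop :=
  ∀ i j : Fin n, j < i → A i j = ⊥

/-- Word substitution: replace each letter `a` (`= true`) of `w` by `w₁` and each letter
`b` (`= false`) by `w₂`. -/
def subst (w w₁ w₂ : List Bool) : List Bool :=
  w.flatMap (fun x => if x then w₁ else w₂)

/-- `k`-fold concatenation `w^k` of a word. -/
def wpow (w : List Bool) : ℕ → List Bool
  | 0 => []
  | t + 1 => w ++ wpow w t

/-- Evaluation of a word over an alphabet `α` in a semigroup `S` under the assignment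
`f : α → S`; returns `none` on the empty word. -/
def aEval {S : Type*} [Mul S] {α : Type*} (f : α → S) : List α → Option S
  | [] => none
  | x :: w => some (w.foldl (fun acc y => acc * f y) (f x))

-- auxiliary lemmas

lemma permWeight_le_tPer {n : ℕ} (A : Matrix (Fin n) (Fin n) Trop) (π : Equiv.Perm (Fin n)) :
    permWeight A π ≤ tPer A := Finset.le_sup (Finset.mem_univ π)

lemma tmul_le {n : ℕ} (X M : Matrix (Fin n) (Fin n) Trop) (i j k : Fin n) :
    X i k + M k j ≤ tmul X M i j :=
  Finset.le_sup (f := fun k => X i k + M k j) (Finset.mem_univ k)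

lemma count_trace_step {n : ℕ} (A B : Matrix (Fin n) (Fin n) Trop) (x : Bool) (w' : List Bool)
    (u v : Trop) :
    (if x then u else v) + (w'.count true • u + w'.count false • v)
      = (x :: w').count true • u + (x :: w').count false • v := by
  cases x
  · rw [if_neg (by simp)]
    have h1 : (false :: w').count true = w'.count true := by simp
    have h2 : (false :: w').count false = w'.count false + 1 := by simp
    rw [h1, h2, succ_nsmul]
    abel
  · rw [if_pos rfl]
    have h1 : (true :: w').count true = w'.count true + 1 := by simp
    have h2 : (true :: w').count false = w'.count false := by simp
    rw [h1, h2, succ_nsmul]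
    abel

lemma diag_lower {n : ℕ} (A B : Matrix (Fin n) (Fin n) Trop) (w : List Bool) (j : Fin n) :
    w.count true • A j j + w.count false • B j j ≤ mEval A B w j j := by
  induction w with
  | nil => simp [mEval, tId]
  | cons x w' ih =>
    have h1 : (if x then A else B) j j + mEval A B w' j j ≤ mEval A B (x :: w') j j :=
      tmul_le (if x then A else B) (mEval A B w') j j j
    have h2 := count_trace_step A B x w' (A j j) (B j j)
    calc (x :: w').count true • A j j + (x :: w').count false • B j j
        = (if x then A else B) j j + (w'.count true • A j j + w'.count false • B j j) := by
          rw [← h2]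
          cases x <;> simp
      _ ≤ (if x then A else B) j j + mEval A B w' j j := add_le_add_right ih _
      _ ≤ mEval A B (x :: w') j j := h1
lemma key_lemma {n : ℕ} (hn : 0 < n) (A B : Matrix (Fin n) (Fin n) Trop)
    (hA : tPer A = tTrace A) (hB : tPer B = tTrace B) :
    ∀ (w : List Bool) (π : Equiv.Perm (Fin n)),
      (∃ π' : Equiv.Perm (Fin n), π' ≠ π ∧
        permWeight (mEval A B w) π ≤ permWeight (mEval A B w) π') ∨
      permWeight (mEval A B w) π ≤ w.count true • tTrace A + w.count false • tTrace B := by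
  haveI : Nonempty (Fin n) := Fin.pos_iff_nonempty.mp hn
  intro w
  induction w with
  | nil =>
    intro π
    right
    have h1 : ∀ j : Fin n, tId n j (π j) ≤ 0 := by
      intro j
      unfold tId
      split
      · exact le_refl _
      · exact bot_le
    have h2 : permWeight (mEval A B []) π ≤ 0 := by
      calc permWeight (mEval A B []) π = ∑ j, tId n j (π j) := rfl
        _ ≤ ∑ _j : Fin n, (0 : Trop) := Finset.sum_le_sum (fun j _ => h1 j)
        _ = 0 := by simp
    simpa using h2
  | cons x w' ih =>
    intro π
    set X : Matrix (Fin n) (Fin n) Trop := if x then A else B with hX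
    set M' := mEval A B w' with hM'
    have hMeq : mEval A B (x :: w') = tmul X M' := rfl
    have hXper : tPer X = tTrace X := by
      rw [hX]; cases x
      · rw [if_neg (by simp)]; exact hB
      · rw [if_pos rfl]; exact hA
    have hch : ∀ i : Fin n, ∃ k, tmul X M' i (π i) = X i k + M' k (π i) := by
      intro i
      obtain ⟨k, -, hk⟩ := Finset.exists_mem_eq_sup Finset.univ Finset.univ_nonempty
        (fun k => X i k + M' k (π i))
      exact ⟨k, hk⟩
    choose f hf using hch
    have hsum : permWeight (tmul X M') π = (∑ j, X j (f j)) + ∑ j, M' (f j) (π j) := by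
      unfold permWeight
      rw [← Finset.sum_add_distrib]
      exact Finset.sum_congr rfl (fun j _ => hf j)
    by_cases hinj : Function.Injective f
    · -- injective case
      have hbij := Finite.injective_iff_bijective.mp hinj
      set g : Equiv.Perm (Fin n) := Equiv.ofBijective f hbij with hg
      have hgf : ∀ j, g j = f j := fun j => rfl
      set σ : Equiv.Perm (Fin n) := π * g⁻¹ with hσ
      have hσg : ∀ j, σ (g j) = π j := by
        intro j
        rw [hσ]
        simp [Equiv.Perm.mul_apply]
      have hXg : (∑ j, X j (f j)) = permWeight X g := by
        unfold permWeight
        exact Finset.sum_congr rfl (fun j _ => by rw [hgf j])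
      have hsum2 : ∑ j, M' (f j) (π j) = permWeight M' σ := by
        unfold permWeight
        rw [← Equiv.sum_comp g (fun j => M' j (σ j))]
        refine Finset.sum_congr rfl (fun j _ => ?_)
        rw [hσg j, hgf j]
      rcases ih σ with ⟨σ', hσ'ne, hσ'le⟩ | hle
      · left
        refine ⟨σ' * g, ?_, ?_⟩
        · intro hcon
          apply hσ'ne
          rw [hσ, ← hcon]
          group
        · have hkey : (∑ j, X j (f j)) + permWeight M' σ' ≤ permWeight (tmul X M') (σ' * g) := by
            have h1 : (∑ j, X j (f j)) + permWeight M' σ'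
                = ∑ j, (X j (f j) + M' (f j) ((σ' * g) j)) := by
              rw [Finset.sum_add_distrib]
              congr 1
              unfold permWeight
              rw [← Equiv.sum_comp g (fun j => M' j (σ' j))]
              refine Finset.sum_congr rfl (fun j _ => ?_)
              rw [hgf j]
              rfl
            rw [h1]
            exact Finset.sum_le_sum (fun j _ => tmul_le X M' j ((σ' * g) j) (f j))
          calc permWeight (mEval A B (x :: w')) π
              = (∑ j, X j (f j)) + permWeight M' σ := by rw [hMeq, hsum, hsum2]
            _ ≤ (∑ j, X j (f j)) + permWeight M' σ' := add_le_add_right hσ'le _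
            _ ≤ permWeight (tmul X M') (σ' * g) := hkey
            _ = permWeight (mEval A B (x :: w')) (σ' * g) := by rw [hMeq]
      · right
        have hXle : (∑ j, X j (f j)) ≤ tTrace X := by
          rw [hXg, ← hXper]
          exact permWeight_le_tPer X g
        have htr : tTrace X = if x then tTrace A else tTrace B := by
          rw [hX]; cases x
          · rw [if_neg (by simp), if_neg (by simp)]
          · rw [if_pos rfl, if_pos rfl]
        calc permWeight (mEval A B (x :: w')) π
            = (∑ j, X j (f j)) + permWeight M' σ := by rw [hMeq, hsum, hsum2]
          _ ≤ tTrace X + (w'.count true • tTrace A + w'.count false • tTrace B) :=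
              add_le_add hXle hle
          _ = (x :: w').count true • tTrace A + (x :: w').count false • tTrace B := by
              rw [htr]
              exact count_trace_step A B x w' (tTrace A) (tTrace B)
    · -- non-injective case: swap tails
      obtain ⟨i₁, i₂, hfeq, hne12⟩ := Function.not_injective_iff.mp hinj
      left
      set s : Equiv.Perm (Fin n) := Equiv.swap i₁ i₂ with hs
      have hfs : ∀ j, f (s j) = f j := by
        intro j
        rcases eq_or_ne j i₁ with rfl | h1
        · rw [hs, Equiv.swap_apply_left]
          exact hfeq.symm
        rcases eq_or_ne j i₂ with rfl | h2
        · rw [hs, Equiv.swap_apply_right]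
          exact hfeq
        · rw [hs, Equiv.swap_apply_of_ne_of_ne h1 h2]
      refine ⟨π * s, ?_, ?_⟩
      · intro hcon
        apply hne12
        have h1 : (π * s) i₁ = π i₁ := by rw [hcon]
        rw [Equiv.Perm.mul_apply, hs, Equiv.swap_apply_left] at h1
        exact (π.injective h1).symm
      · have h1 : ∑ j, M' (f j) (π j) = ∑ j, M' (f j) (π (s j)) := by
          rw [← Equiv.sum_comp s (fun j => M' (f j) (π j))]
          refine Finset.sum_congr rfl (fun j _ => ?_)
          rw [hfs j]
        have h2 : (∑ j, X j (f j)) + ∑ j, M' (f j) (π (s j))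
            ≤ permWeight (tmul X M') (π * s) := by
          rw [← Finset.sum_add_distrib]
          exact Finset.sum_le_sum (fun j _ => tmul_le X M' j ((π * s) j) (f j))
        calc permWeight (mEval A B (x :: w')) π
            = (∑ j, X j (f j)) + ∑ j, M' (f j) (π j) := by rw [hMeq, hsum]
          _ = (∑ j, X j (f j)) + ∑ j, M' (f j) (π (s j)) := by rw [h1]
          _ ≤ permWeight (tmul X M') (π * s) := h2
          _ = permWeight (mEval A B (x :: w')) (π * s) := by rw [hMeq]
/-- diagonal entries lemma.  Under condition (PR), the `i`-th diagonal
entry of `w(A,B)` equals `|w|_a · A_{i,i} + |w|_b · B_{i,i}`. -/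
theorem diag_entry_eval {n : ℕ} (A B : Matrix (Fin n) (Fin n) Trop)
    (w : List Bool) (hw : w ≠ [])
    (hA : tPer A = tTrace A) (hB : tPer B = tTrace B)
    (hrk : tropRank (mEval A B w) = n) (i : Fin n) :
    mEval A B w i i = w.count true • A i i + w.count false • B i i := by
  have hn : 0 < n := i.pos
  haveI : Nonempty (Fin n) := Fin.pos_iff_nonempty.mp hn
  set M := mEval A B w with hM
  -- the set defining the tropical rank
  set S : Set ℕ := {k : ℕ | ∃ (r : Fin k → Fin n) (c : Fin k → Fin n),
    Function.Injective r ∧ Function.Injective c ∧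
    Nonsingular (fun i j => M (r i) (c j))} with hS
  have hrkS : tropRank M = sSup S := rfl
  have hSne : S.Nonempty := by
    refine ⟨0, Fin.elim0, Fin.elim0, fun a => a.elim0, fun a => a.elim0, ?_⟩
    have huniq : ∀ π : Equiv.Perm (Fin 0), π = 1 := fun π => Equiv.ext fun a => a.elim0
    refine ⟨1, ?_, fun π _ => huniq π⟩
    refine le_antisymm (permWeight_le_tPer _ 1) (Finset.sup_le fun π _ => ?_)
    rw [huniq π]
  have hbdd : BddAbove S := by
    refine ⟨n, fun k hk => ?_⟩
    obtain ⟨r, c, hr, -, -⟩ := hk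
    simpa using Fintype.card_le_of_injective r hr
  have hnS : n ∈ S := by
    rw [← hrk, hrkS]
    exact Nat.sSup_mem hSne hbdd
  obtain ⟨r, c, hr, hc, hNS⟩ := hnS
  have hrb : Function.Bijective r := Finite.injective_iff_bijective.mp hr
  have hcb : Function.Bijective c := Finite.injective_iff_bijective.mp hc
  set ρ : Equiv.Perm (Fin n) := Equiv.ofBijective r hrb with hρ
  set γ : Equiv.Perm (Fin n) := Equiv.ofBijective c hcb with hγ
  set N : Matrix (Fin n) (Fin n) Trop := fun i j => M (r i) (c j) with hN
  have hweq : ∀ π : Equiv.Perm (Fin n), permWeight N π = permWeight M (γ * π * ρ⁻¹) := by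
    intro π
    unfold permWeight
    rw [← Equiv.sum_comp ρ (fun j => M j ((γ * π * ρ⁻¹) j))]
    refine Finset.sum_congr rfl (fun k _ => ?_)
    have h1 : (γ * π * ρ⁻¹) (ρ k) = γ (π k) := by
      simp [Equiv.Perm.mul_apply]
    rw [h1]
    rfl
  have hper : tPer N = tPer M := by
    apply le_antisymm
    · refine Finset.sup_le fun π _ => ?_
      rw [hweq π]
      exact permWeight_le_tPer M _
    · refine Finset.sup_le fun σ _ => ?_
      have h1 : σ = γ * (γ⁻¹ * σ * ρ) * ρ⁻¹ := by group
      calc permWeight M σ = permWeight N (γ⁻¹ * σ * ρ) := by rw [hweq]; rw [← h1]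
        _ ≤ tPer N := permWeight_le_tPer N _
  have hU : ∃! σ : Equiv.Perm (Fin n), permWeight M σ = tPer M := by
    obtain ⟨π₀, hπ₀, huniq⟩ := hNS
    refine ⟨γ * π₀ * ρ⁻¹, ?_, ?_⟩
    · show permWeight M (γ * π₀ * ρ⁻¹) = tPer M
      rw [← hweq, hπ₀, hper]
    intro σ hσ
    have h1 : permWeight N (γ⁻¹ * σ * ρ) = tPer N := by
      have h2 : σ = γ * (γ⁻¹ * σ * ρ) * ρ⁻¹ := by group
      rw [hweq, ← h2, hσ, hper]
    have h3 := huniq _ h1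
    rw [← h3]
    group
  obtain ⟨σ₀, hσ₀, huq⟩ := hU
  -- upper bound on the permanent via the key lemma
  have hperle : tPer M ≤ w.count true • tTrace A + w.count false • tTrace B := by
    rcases key_lemma hn A B hA hB w σ₀ with ⟨π', hπ'ne, hπ'le⟩ | h
    · exact absurd (huq π' (le_antisymm (permWeight_le_tPer M π') (hσ₀ ▸ hπ'le))) hπ'ne
    · rw [← hσ₀]
      exact h
  -- lower bounds
  have hd : ∀ j, w.count true • A j j + w.count false • B j j ≤ M j j :=
    fun j => diag_lower A B w j
  have htrper : (∑ j, M j j) ≤ tPer M := by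
    have h1 : permWeight M 1 = ∑ j, M j j :=
      Finset.sum_congr rfl (fun j _ => by rw [Equiv.Perm.one_apply])
    rw [← h1]
    exact permWeight_le_tPer M 1
  have hnsmul_sum : ∀ (t : ℕ) (f : Fin n → Trop), (∑ j, t • f j) = t • ∑ j, f j := by
    intro t f
    induction t with
    | zero => simp
    | succ k ihc => simp [succ_nsmul, Finset.sum_add_distrib, ihc]
  have hsum_d : (∑ j, (w.count true • A j j + w.count false • B j j))
      = w.count true • tTrace A + w.count false • tTrace B := by
    rw [Finset.sum_add_distrib, hnsmul_sum, hnsmul_sum]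
    rfl
  have hchain : (∑ j, M j j) = ∑ j, (w.count true • A j j + w.count false • B j j) := by
    apply le_antisymm
    · rw [hsum_d]
      exact le_trans htrper hperle
    · exact Finset.sum_le_sum (fun j _ => hd j)
  rcases eq_or_lt_of_le (Nat.one_le_iff_ne_zero.mpr (Nat.pos_iff_ne_zero.mp hn)) with h1n | h2n
  · -- n = 1
    have hn1 : n = 1 := h1n.symm
    subst hn1
    have hi0 : i = 0 := Subsingleton.elim i 0
    rw [Fin.sum_univ_one, Fin.sum_univ_one] at hchain
    rw [hi0]
    exact hchain
  · -- n ≥ 2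
    have hperM_ne : tPer M ≠ ⊥ := by
      intro hb
      obtain ⟨j, hj⟩ := Fintype.exists_ne_of_one_lt_card (by simpa using h2n) i
      have hall : ∀ π : Equiv.Perm (Fin n), permWeight M π = tPer M := fun π =>
        le_antisymm (permWeight_le_tPer M π) (by rw [hb]; exact bot_le)
      have hswid : Equiv.swap i j = 1 := (huq _ (hall (Equiv.swap i j))).trans (huq 1 (hall 1)).symm
      have : Equiv.swap i j i = i := by rw [hswid]; rfl
      rw [Equiv.swap_apply_left] at this
      exact hj this
    have hsumM_ne : (∑ j, M j j) ≠ ⊥ := by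
      intro hb
      apply hperM_ne
      refine le_bot_iff.mp ?_
      calc tPer M ≤ w.count true • tTrace A + w.count false • tTrace B := hperle
        _ = ∑ j, (w.count true • A j j + w.count false • B j j) := hsum_d.symm
        _ = ∑ j, M j j := hchain.symm
        _ = ⊥ := hb
    have hterm : ∀ (f : Fin n → Trop) (j : Fin n), f j = ⊥ → (∑ k, f k) = ⊥ := by
      intro f j hj
      rw [← Finset.add_sum_erase Finset.univ f (Finset.mem_univ j), hj]
      exact WithBot.bot_add _
    have hMjj_ne : ∀ j, M j j ≠ ⊥ := fun j hj => hsumM_ne (hterm _ j hj)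
    have hdjj_ne : ∀ j, (w.count true • A j j + w.count false • B j j) ≠ ⊥ := by
      intro j hj
      apply hsumM_ne
      rw [hchain]
      exact hterm _ j hj
    have hex : ∀ j, ∃ a : ℝ, (a : Trop) = w.count true • A j j + w.count false • B j j :=
      fun j => WithBot.ne_bot_iff_exists.mp (hdjj_ne j)
    have hex' : ∀ j, ∃ b : ℝ, (b : Trop) = M j j :=
      fun j => WithBot.ne_bot_iff_exists.mp (hMjj_ne j)
    choose da hda using hex
    choose db hdb using hex'
    have hcoes : ∀ (f : Fin n → ℝ), ((∑ j, f j : ℝ) : Trop) = ∑ j, (f j : Trop) := by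
      intro f
      induction (Finset.univ : Finset (Fin n)) using Finset.cons_induction with
      | empty => simp
      | cons a s ha ihs => rw [Finset.sum_cons, Finset.sum_cons, WithBot.coe_add, ihs]
    by_contra hcon
    have hlt : da i < db i := by
      have hle : (da i : Trop) ≤ (db i : Trop) := by rw [hda, hdb]; exact hd i
      have hne : (da i : Trop) ≠ (db i : Trop) := by
        rw [hda, hdb]
        exact fun h => hcon (h.symm)
      exact lt_of_le_of_ne (WithBot.coe_le_coe.mp hle) (fun h => hne (by rw [h]))
    have hles : ∀ j, da j ≤ db j := by
      intro j
      have hle : (da j : Trop) ≤ (db j : Trop) := by rw [hda, hdb]; exact hd j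
      exact WithBot.coe_le_coe.mp hle
    have hsums : (∑ j, da j) = ∑ j, db j := by
      have h1 : ((∑ j, da j : ℝ) : Trop) = ((∑ j, db j : ℝ) : Trop) := by
        rw [hcoes, hcoes]
        calc (∑ j, (da j : Trop)) = ∑ j, (w.count true • A j j + w.count false • B j j) :=
              Finset.sum_congr rfl (fun j _ => hda j)
          _ = ∑ j, M j j := hchain.symm
          _ = ∑ j, (db j : Trop) := Finset.sum_congr rfl (fun j _ => (hdb j).symm)
      exact WithBot.coe_inj.mp h1
    have : (∑ j, da j) < ∑ j, db j :=
      Finset.sum_lt_sum (fun j _ => hles j) ⟨i, Finset.mem_univ i, hlt⟩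
    exact absurd hsums (ne_of_lt this)
end

section
/- Let A, B ∈ Mat_n(𝕋) and w ∈ {a,b}⁺ satisfy per(A) = tr(A), per(B) = tr(B), and rk_tr(w(A,B)) = n, and set W = w(A,B). Then for every entry W_{i,j} ≠ −∞ there exists a 1-cyclic walk from i to j on the labeled weighted digraph G(A,B), labeled by the word w, whose weight is exactly W_{i,j}. (A walk is 1-cyclic if it never returns to a node after leaving it; equivalently, every simple cycle it contains has length at most 1.) -/
attribute [local instance] Classical.propDecidable

-- ##### helpers #####

lemma trop_add_ne_bot {a b : Trop} : a + b ≠ ⊥ ↔ a ≠ ⊥ ∧ b ≠ ⊥ := by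
  rw [ne_eq, WithBot.add_eq_bot]; tauto

lemma trop_sum_ne_bot {α : Type*} {s : Finset α} {f : α → Trop} (h : ∑ x ∈ s, f x ≠ ⊥) :
    ∀ x ∈ s, f x ≠ ⊥ := by
  induction s using Finset.cons_induction with
  | empty => simp
  | cons a s ha ih =>
    rw [Finset.sum_cons] at h
    rcases trop_add_ne_bot.mp h with ⟨h1, h2⟩
    intro x hx
    rcases Finset.mem_cons.mp hx with rfl | hx
    · exact h1
    · exact ih h2 x hx

lemma trop_le_of_add_le_add_left {a b c : Trop} (ha : a ≠ ⊥) (h : a + b ≤ a + c) : b ≤ c := by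
  by_cases hb : b = ⊥
  · exact hb ▸ bot_le
  by_cases hc : c = ⊥
  · exfalso
    rw [hc, WithBot.add_bot, le_bot_iff, WithBot.add_eq_bot] at h
    tauto
  rcases WithBot.ne_bot_iff_exists.mp ha with ⟨ar, rfl⟩
  rcases WithBot.ne_bot_iff_exists.mp hb with ⟨br, rfl⟩
  rcases WithBot.ne_bot_iff_exists.mp hc with ⟨cr, rfl⟩
  rw [← WithBot.coe_add, ← WithBot.coe_add, WithBot.coe_le_coe] at h
  rw [WithBot.coe_le_coe]
  linarith

lemma trop_le_of_add_le_add_right {b b' c : Trop} (hc : c ≠ ⊥) (h : b + c ≤ b' + c) : b ≤ b' := by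
  rw [add_comm b c, add_comm b' c] at h
  exact trop_le_of_add_le_add_left hc h

lemma trop_sum_eq_of_le_of_sum_le {α : Type*} {s : Finset α} {f g : α → Trop}
    (hfg : ∀ x ∈ s, f x ≤ g x) (hle : ∑ x ∈ s, g x ≤ ∑ x ∈ s, f x)
    (hne : ∑ x ∈ s, f x ≠ ⊥) : ∀ x ∈ s, f x = g x := by
  induction s using Finset.cons_induction with
  | empty => simp
  | cons a s ha ih =>
    simp only [Finset.sum_cons] at hle hne
    rcases trop_add_ne_bot.mp hne with ⟨hfa, hfs⟩
    have hfga : f a ≤ g a := hfg a (Finset.mem_cons_self a s)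
    have hfgs : ∀ x ∈ s, f x ≤ g x := fun x hx => hfg x (Finset.mem_cons.mpr (Or.inr hx))
    have hsums : ∑ x ∈ s, f x ≤ ∑ x ∈ s, g x := Finset.sum_le_sum hfgs
    have hga : g a ≠ ⊥ := fun hb => hfa (le_bot_iff.mp (hb ▸ hfga))
    have h1 : ∑ x ∈ s, g x ≤ ∑ x ∈ s, f x :=
      trop_le_of_add_le_add_left hga
        (le_trans hle (add_le_add hfga le_rfl))
    have hseq : ∀ x ∈ s, f x = g x := ih hfgs h1 hfs
    have hsum_eq : ∑ x ∈ s, f x = ∑ x ∈ s, g x := Finset.sum_congr rfl hseq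
    have hgs : ∑ x ∈ s, g x ≠ ⊥ := hsum_eq ▸ hfs
    have h2 : g a ≤ f a := by
      apply trop_le_of_add_le_add_right hgs
      calc g a + ∑ x ∈ s, g x ≤ f a + ∑ x ∈ s, f x := hle
        _ = f a + ∑ x ∈ s, g x := by rw [hsum_eq]
    intro x hx
    rcases Finset.mem_cons.mp hx with rfl | hx
    · exact le_antisymm hfga h2
    · exact hseq x hx

-- ##### pathW #####

def letterM {n : ℕ} (A B : Matrix (Fin n) (Fin n) Trop) (x : Bool) :
    Matrix (Fin n) (Fin n) Trop := if x then A else B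

def pathW {n : ℕ} (A B : Matrix (Fin n) (Fin n) Trop) : List Bool → (ℕ → Fin n) → Trop
  | [], _ => 0
  | x :: u, g => letterM A B x (g 0) (g 1) + pathW A B u (fun s => g (s + 1))

variable {n : ℕ} (A B : Matrix (Fin n) (Fin n) Trop)

lemma pathW_nil (g : ℕ → Fin n) : pathW A B [] g = 0 := rfl

lemma pathW_cons (x : Bool) (u : List Bool) (g : ℕ → Fin n) :
    pathW A B (x :: u) g = letterM A B x (g 0) (g 1) + pathW A B u (fun s => g (s + 1)) := rfl

lemma pathW_congr : ∀ (w : List Bool) (g g' : ℕ → Fin n),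
    (∀ t ≤ w.length, g t = g' t) → pathW A B w g = pathW A B w g'
  | [], _, _, _ => rfl
  | x :: u, g, g', h => by
    rw [pathW_cons, pathW_cons, h 0 (Nat.zero_le _), h 1 (Nat.succ_le_succ (Nat.zero_le _)),
      pathW_congr u (fun s => g (s + 1)) (fun s => g' (s + 1))
        (fun t ht => h (t + 1) (Nat.succ_le_succ ht))]

lemma pathW_append : ∀ (u v : List Bool) (g : ℕ → Fin n),
    pathW A B (u ++ v) g = pathW A B u g + pathW A B v (fun s => g (s + u.length))
  | [], v, g => by
    simp only [List.nil_append, pathW_nil, zero_add, List.length_nil, Nat.add_zero]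
  | x :: u, v, g => by
    rw [List.cons_append, pathW_cons, pathW_append u v (fun s => g (s + 1)), pathW_cons,
      add_assoc]
    congr 1

lemma pathW_split (w : List Bool) (t : ℕ) (ht : t ≤ w.length) (g : ℕ → Fin n) :
    pathW A B w g = pathW A B (w.take t) g + pathW A B (w.drop t) (fun s => g (s + t)) := by
  conv_lhs => rw [← List.take_append_drop t w]
  rw [pathW_append]
  congr 1
  apply pathW_congr
  intro s _
  congr 1
  rw [List.length_take]
  exact congrArg (s + ·) (min_eq_left ht)

lemma pathW_trisplit (w : List Bool) (t1 t2 : ℕ) (h12 : t1 ≤ t2) (h2L : t2 ≤ w.length)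
    (g : ℕ → Fin n) :
    pathW A B w g = pathW A B (w.take t1) g
      + pathW A B ((w.drop t1).take (t2 - t1)) (fun s => g (s + t1))
      + pathW A B (w.drop t2) (fun s => g (s + t2)) := by
  rw [pathW_split A B w t1 (le_trans h12 h2L) g,
    pathW_split A B (w.drop t1) (t2 - t1) (by rw [List.length_drop]; omega) (fun s => g (s + t1)),
    ← add_assoc]
  have h3 : (w.drop t1).drop (t2 - t1) = w.drop t2 := by
    rw [List.drop_drop]
    congr 1
    omega
  rw [h3]
  congr 1
  apply pathW_congr
  intro s _
  show g (s + (t2 - t1) + t1) = g (s + t2)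
  congr 1
  omega

lemma pathW_le_mEval : ∀ (w : List Bool) (g : ℕ → Fin n) (i j : Fin n),
    g 0 = i → g w.length = j → pathW A B w g ≤ mEval A B w i j
  | [], g, i, j, h0, hL => by
    have hij : i = j := h0 ▸ hL ▸ rfl
    subst hij
    simp [mEval, tId, pathW_nil]
  | x :: u, g, i, j, h0, hL => by
    have h1 : mEval A B (x :: u) i j = Finset.univ.sup
        (fun k => letterM A B x i k + mEval A B u k j) := rfl
    rw [h1, pathW_cons, h0]
    calc letterM A B x i (g 1) + pathW A B u (fun s => g (s + 1))
        ≤ letterM A B x i (g 1) + mEval A B u (g 1) j := by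
          apply add_le_add le_rfl
          exact pathW_le_mEval u (fun s => g (s + 1)) (g 1) j rfl hL
      _ ≤ _ := Finset.le_sup (f := fun k => letterM A B x i k + mEval A B u k j)
        (Finset.mem_univ (g 1))

lemma pathW_exists : ∀ (w : List Bool) (i j : Fin n), mEval A B w i j ≠ ⊥ →
    ∃ g : ℕ → Fin n, g 0 = i ∧ g w.length = j ∧ pathW A B w g = mEval A B w i j
  | [], i, j, h => by
    have hij : i = j := by
      by_contra hne
      simp [mEval, tId, hne] at h
    subst hij
    exact ⟨fun _ => i, rfl, rfl, by simp [mEval, tId, pathW_nil]⟩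
  | x :: u, i, j, h => by
    have h1 : mEval A B (x :: u) i j = Finset.univ.sup
        (fun k => letterM A B x i k + mEval A B u k j) := rfl
    have hne : (Finset.univ : Finset (Fin n)).Nonempty := ⟨i, Finset.mem_univ i⟩
    obtain ⟨k, -, hk⟩ := Finset.exists_mem_eq_sup Finset.univ hne
      (fun k => letterM A B x i k + mEval A B u k j)
    rw [h1, hk] at h ⊢
    rcases trop_add_ne_bot.mp h with ⟨-, hu⟩
    obtain ⟨g', hg0, hgL, hgw⟩ := pathW_exists u k j hu
    refine ⟨fun t => match t with | 0 => i | t + 1 => g' t, rfl, hgL, ?_⟩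
    rw [pathW_cons]
    simp only []
    rw [hg0, hgw]

lemma pathW_fin_sum : ∀ (w : List Bool) (g : ℕ → Fin n),
    pathW A B w g = ∑ k : Fin w.length, letterM A B (w.get k) (g k.val) (g (k.val + 1))
  | [], g => by simp [pathW_nil]
  | x :: u, g => by
    rw [pathW_cons, pathW_fin_sum u (fun s => g (s + 1))]
    have h0 : ∑ k : Fin (x :: u).length, letterM A B ((x :: u).get k) (g k.val) (g (k.val + 1))
        = ∑ k : Fin (u.length + 1), letterM A B ((x :: u).get k) (g k.val) (g (k.val + 1)) := rfl
    rw [h0, Fin.sum_univ_succ]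
    rfl

-- ##### key bound #####

lemma tPer_letter (hA : tPer A = tTrace A) (hB : tPer B = tTrace B) (x : Bool) :
    tPer (letterM A B x) = tTrace (letterM A B x) := by
  cases x <;> simpa [letterM]

lemma key_bound (hA : tPer A = tTrace A) (hB : tPer B = tTrace B) :
    ∀ (u : List Bool) (g : Fin n → ℕ → Fin n),
      (∀ t ≤ u.length, Function.Bijective (fun i => g i t)) →
      ∑ i, pathW A B u (g i) ≤ ∑ v, pathW A B u (fun _ => v) := by
  intro u
  induction u with
  | nil => intro g _; simp [pathW_nil]
  | cons x u ih =>
    intro g hg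
    simp only [pathW_cons]
    rw [Finset.sum_add_distrib, Finset.sum_add_distrib]
    apply add_le_add
    · -- step bound via permutation
      let e0 : Fin n ≃ Fin n := Equiv.ofBijective _ (hg 0 (Nat.zero_le _))
      let e1 : Fin n ≃ Fin n := Equiv.ofBijective _ (hg 1 (Nat.succ_le_succ (Nat.zero_le _)))
      have h1 : ∑ i, letterM A B x (g i 0) (g i 1)
          = ∑ v, letterM A B x v ((e0.symm.trans e1) v) := by
        rw [← Equiv.sum_comp e0.symm (fun i => letterM A B x (g i 0) (g i 1))]
        apply Finset.sum_congr rfl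
        intro v _
        have : g (e0.symm v) 0 = v := e0.apply_symm_apply v
        rw [this]
        rfl
      rw [h1]
      have h2 : ∑ v, letterM A B x v ((e0.symm.trans e1) v)
          = permWeight (letterM A B x) (e0.symm.trans e1) := rfl
      rw [h2]
      calc permWeight (letterM A B x) (e0.symm.trans e1)
          ≤ tPer (letterM A B x) := Finset.le_sup (Finset.mem_univ _)
        _ = tTrace (letterM A B x) := tPer_letter A B hA hB x
        _ = ∑ v, letterM A B x v v := rfl
    · -- inductive part
      have := ih (fun i s => g i (s + 1)) (fun t ht => hg (t + 1) (Nat.succ_le_succ ht))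
      exact this

-- ##### rank → nonsingular #####

lemma nonsingular_zero (M : Matrix (Fin 0) (Fin 0) Trop) : Nonsingular M := by
  have hsub : ∀ π σ : Equiv.Perm (Fin 0), π = σ := fun π σ => Equiv.ext (fun x => x.elim0)
  refine ⟨1, ?_, fun π _ => hsub π 1⟩
  apply le_antisymm
  · exact Finset.le_sup (Finset.mem_univ 1)
  · exact Finset.sup_le (fun π _ => by rw [hsub π 1])

lemma nonsingular_of_rank {n : ℕ} (W : Matrix (Fin n) (Fin n) Trop) (h : tropRank W = n) :
    Nonsingular W := by
  set S : Set ℕ := {k : ℕ | ∃ (r : Fin k → Fin n) (c : Fin k → Fin n),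
    Function.Injective r ∧ Function.Injective c ∧
    Nonsingular (fun i j => W (r i) (c j))} with hS
  have hne : S.Nonempty := by
    refine ⟨0, Fin.elim0, Fin.elim0, fun x => x.elim0, fun x => x.elim0, ?_⟩
    exact nonsingular_zero _
  have hbdd : BddAbove S := by
    refine ⟨n, fun k hk => ?_⟩
    obtain ⟨r, c, hr, -, -⟩ := hk
    have := Fintype.card_le_of_injective r hr
    simpa using this
  have hmem : n ∈ S := h ▸ Nat.sSup_mem hne hbdd
  obtain ⟨r, c, hr, hc, hNS⟩ := hmem
  have hrb : Function.Bijective r := Finite.injective_iff_bijective.mp hr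
  have hcb : Function.Bijective c := Finite.injective_iff_bijective.mp hc
  let er : Fin n ≃ Fin n := Equiv.ofBijective r hrb
  let ec : Fin n ≃ Fin n := Equiv.ofBijective c hcb
  let τ : Equiv.Perm (Fin n) → Equiv.Perm (Fin n) := fun π => er.symm.trans (π.trans ec)
  have hτ : ∀ π, permWeight (fun i j => W (r i) (c j)) π = permWeight W (τ π) := by
    intro π
    show ∑ i, W (r i) (c (π i)) = ∑ v, W v (ec (π (er.symm v)))
    rw [← Equiv.sum_comp er (fun v => W v (ec (π (er.symm v))))]
    apply Finset.sum_congr rfl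
    intro i _
    have h1 : er.symm (er i) = i := er.symm_apply_apply i
    rw [h1]
    rfl
  have hτsurj : Function.Surjective τ := by
    intro σ
    refine ⟨er.trans (σ.trans ec.symm), ?_⟩
    apply Equiv.ext
    intro v
    simp [τ, er, ec]
  have hper : tPer (fun i j => W (r i) (c j)) = tPer W := by
    apply le_antisymm
    · apply Finset.sup_le
      intro π _
      rw [hτ π]
      exact Finset.le_sup (Finset.mem_univ (τ π))
    · apply Finset.sup_le
      intro σ _
      obtain ⟨π, rfl⟩ := hτsurj σ
      rw [← hτ π]
      exact Finset.le_sup (Finset.mem_univ π)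
  obtain ⟨π₁, hπ₁, hu₁⟩ := hNS
  refine ⟨τ π₁, ?_, ?_⟩
  · show permWeight W (τ π₁) = tPer W
    rw [← hτ π₁, hπ₁, hper]
  · intro σ hσ
    obtain ⟨π, rfl⟩ := hτsurj σ
    have : permWeight (fun i j => W (r i) (c j)) π = tPer (fun i j => W (r i) (c j)) := by
      rw [hτ π, hσ, hper]
    rw [hu₁ π this]

-- ##### toG #####

def toG {n : ℕ} (L : ℕ) (F : Fin (L + 1) → Fin n) : ℕ → Fin n :=
  fun t => F ⟨min t L, Nat.lt_succ_of_le (min_le_right t L)⟩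

lemma toG_eq {n : ℕ} (L : ℕ) (F : Fin (L + 1) → Fin n) (t : ℕ) (ht : t ≤ L) :
    toG L F t = F ⟨t, Nat.lt_succ_of_le ht⟩ := by
  unfold toG
  congr 1
  exact Fin.ext (min_eq_left ht)


/-- 1-cyclic walk lemma.  Under condition (PR), every non-`−∞` entry
`W_{i,j}` of `W = w(A,B)` is the weight of a 1-cyclic walk from `i` to `j` labeled by `w`.
The walk is encoded by its node sequence `f : Fin (ℓ(w)+1) → Fin n`; 1-cyclic means that
between any two equal occurrences of a node all visited nodes coincide, i.e. the walk never
returns to a node after leaving it. -/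
theorem one_cyclic_walk {n : ℕ} (A B : Matrix (Fin n) (Fin n) Trop)
    (w : List Bool) (hw : w ≠ [])
    (hA : tPer A = tTrace A) (hB : tPer B = tTrace B)
    (hrk : tropRank (mEval A B w) = n)
    (i j : Fin n) (hij : mEval A B w i j ≠ ⊥) :
    ∃ f : Fin (w.length + 1) → Fin n,
      f 0 = i ∧ f (Fin.last w.length) = j ∧
      (∀ k : Fin w.length, (if w.get k then A else B) (f k.castSucc) (f k.succ) ≠ ⊥) ∧
      (∑ k : Fin w.length, (if w.get k then A else B) (f k.castSucc) (f k.succ))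
        = mEval A B w i j ∧
      (∀ k₁ m k₂ : Fin (w.length + 1), k₁ ≤ m → m ≤ k₂ → f k₁ = f k₂ → f m = f k₁) := by
  obtain ⟨π₀, hπ₀, hu⟩ := nonsingular_of_rank _ hrk
  have hn1 : 0 < n := i.pos
  -- tPer ≠ ⊥
  have hperW : tPer (mEval A B w) ≠ ⊥ := by
    rcases Nat.lt_or_ge n 2 with hn2 | hn2
    · have hn : n = 1 := by omega
      subst hn
      intro hbot
      apply hij
      have h1 : permWeight (mEval A B w) 1 ≤ tPer (mEval A B w) :=
        Finset.le_sup (Finset.mem_univ 1)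
      rw [hbot, le_bot_iff] at h1
      have h2 : permWeight (mEval A B w) 1 = mEval A B w i j := by
        have hi : (0 : Fin 1) = i := Subsingleton.elim _ _
        have hj : (0 : Fin 1) = j := Subsingleton.elim _ _
        rw [permWeight, Fin.sum_univ_one]
        rw [← hi, ← hj]
        simp
      rw [h2] at h1
      exact h1
    · intro hbot
      have hall : ∀ π : Equiv.Perm (Fin n), π = π₀ := by
        intro π
        apply hu
        have h1 : permWeight (mEval A B w) π ≤ tPer (mEval A B w) :=
          Finset.le_sup (Finset.mem_univ π)
        rw [hbot, le_bot_iff] at h1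
        show permWeight (mEval A B w) π = tPer (mEval A B w)
        rw [h1, hbot]
      have hne01 : (⟨0, by omega⟩ : Fin n) ≠ ⟨1, by omega⟩ := by
        intro h
        have := congrArg Fin.val h
        simp at this
      have hsw : Equiv.swap (⟨0, by omega⟩ : Fin n) ⟨1, by omega⟩ = 1 :=
        (hall _).trans (hall 1).symm
      have := congrArg (fun e : Equiv.Perm (Fin n) => e ⟨0, by omega⟩) hsw
      simp [Equiv.swap_apply_left] at this
  -- term-wise nonbot along π₀
  have hπ₀ne : permWeight (mEval A B w) π₀ ≠ ⊥ := by rw [hπ₀]; exact hperW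
  have hterm : ∀ v : Fin n, mEval A B w v (π₀ v) ≠ ⊥ := fun v =>
    trop_sum_ne_bot (f := fun v => mEval A B w v (π₀ v)) hπ₀ne v (Finset.mem_univ v)
  -- optimal walks
  choose g hg0 hgL hgw using fun v => pathW_exists A B w v (π₀ v) (hterm v)
  have hc1 : tPer (mEval A B w) = ∑ v, pathW A B w (g v) := by
    rw [← hπ₀]
    exact (Finset.sum_congr rfl fun v _ => (hgw v).symm)
  -- injectivity of time slices
  have H : ∀ t, t ≤ w.length → Function.Injective (fun v => g v t) := by
    intro t ht a b hab
    simp only at hab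
    by_contra hne
    rcases Nat.eq_zero_or_pos t with rfl | htpos
    · rw [hg0 a, hg0 b] at hab; exact hne hab
    have hsplit : ∀ p q : Fin n, g q t = g p t →
        pathW A B w (fun s => if s < t then g p s else g q s)
          = pathW A B (w.take t) (g p) + pathW A B (w.drop t) (fun s => g q (s + t)) := by
      intro p q hpq
      rw [pathW_split A B w t ht]
      congr 1
      · apply pathW_congr
        intro s hs
        rw [List.length_take, min_eq_left ht] at hs
        by_cases h : s < t
        · simp [h]
        · have hst : s = t := by omega
          subst hst
          rw [if_neg h]
          exact hpq
      · apply pathW_congr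
        intro s _
        have hcond : ¬ (s + t < t) := by omega
        simp [hcond]
    set π' : Equiv.Perm (Fin n) := (Equiv.swap a b).trans π₀ with hπ'
    have hπ'a : π' a = π₀ b := by simp [hπ', Equiv.swap_apply_left]
    have hπ'b : π' b = π₀ a := by simp [hπ', Equiv.swap_apply_right]
    have hπ'o : ∀ k, k ≠ a → k ≠ b → π' k = π₀ k := fun k hka hkb => by
      simp [hπ', Equiv.swap_apply_of_ne_of_ne hka hkb]
    set F : Fin n → Trop := fun k =>
      if k = a then pathW A B w (fun s => if s < t then g a s else g b s)
      else if k = b then pathW A B w (fun s => if s < t then g b s else g a s)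
      else pathW A B w (g k) with hF
    have hFle : ∀ k ∈ Finset.univ, F k ≤ mEval A B w k (π' k) := by
      intro k _
      by_cases hka : k = a
      · subst hka
        rw [hF]
        simp only [if_pos rfl]
        rw [hπ'a]
        apply pathW_le_mEval
        · rw [if_pos htpos]; exact hg0 k
        · rw [if_neg (not_lt.mpr ht)]; exact hgL b
      · by_cases hkb : k = b
        · subst hkb
          rw [hF]
          simp only [if_neg hka, if_pos rfl]
          rw [hπ'b]
          apply pathW_le_mEval
          · rw [if_pos htpos]; exact hg0 k
          · rw [if_neg (not_lt.mpr ht)]; exact hgL a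
        · rw [hF]
          simp only [if_neg hka, if_neg hkb]
          rw [hπ'o k hka hkb, hgw k]
    have hpair : F a + F b = pathW A B w (g a) + pathW A B w (g b) := by
      have hFa : F a = pathW A B (w.take t) (g a) + pathW A B (w.drop t) (fun s => g b (s + t)) := by
        rw [hF]; simp only [if_pos rfl]; exact hsplit a b hab.symm
      have hFb : F b = pathW A B (w.take t) (g b) + pathW A B (w.drop t) (fun s => g a (s + t)) := by
        rw [hF]; simp only [if_neg (Ne.symm hne), if_pos rfl]; exact hsplit b a hab
      rw [hFa, hFb, pathW_split A B w t ht (g a), pathW_split A B w t ht (g b)]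
      abel
    have hsum_eq : ∑ k, F k = ∑ k, pathW A B w (g k) := by
      have hbmem : b ∈ Finset.univ.erase a :=
        Finset.mem_erase.mpr ⟨Ne.symm hne, Finset.mem_univ b⟩
      rw [← Finset.add_sum_erase _ F (Finset.mem_univ a),
        ← Finset.add_sum_erase _ (fun k => pathW A B w (g k)) (Finset.mem_univ a),
        ← Finset.add_sum_erase _ F hbmem,
        ← Finset.add_sum_erase _ (fun k => pathW A B w (g k)) hbmem,
        ← add_assoc, ← add_assoc, hpair]
      congr 1
      apply Finset.sum_congr rfl
      intro k hk
      rw [Finset.mem_erase, Finset.mem_erase] at hk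
      rw [hF]
      simp only [if_neg hk.2.1, if_neg hk.1]
    have hge : tPer (mEval A B w) ≤ permWeight (mEval A B w) π' := by
      calc tPer (mEval A B w) = ∑ v, pathW A B w (g v) := hc1
        _ = ∑ k, F k := hsum_eq.symm
        _ ≤ ∑ k, mEval A B w k (π' k) := Finset.sum_le_sum hFle
        _ = permWeight (mEval A B w) π' := rfl
    have hπ'eq : π' = π₀ :=
      hu π' (le_antisymm (Finset.le_sup (Finset.mem_univ π')) hge)
    rw [hπ'eq] at hπ'a
    exact hne (π₀.injective hπ'a)
  -- bijectivity of slices and the key chain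
  have Hbij : ∀ t, t ≤ w.length → Function.Bijective (fun v => g v t) :=
    fun t ht => Finite.injective_iff_bijective.mp (H t ht)
  have hkey := key_bound A B hA hB w g (fun t ht => Hbij t ht)
  have hc3 : ∀ v ∈ Finset.univ, pathW A B w (fun _ => v) ≤ mEval A B w v v :=
    fun v _ => pathW_le_mEval A B w _ v v rfl rfl
  have hc4 : ∑ v, mEval A B w v v ≤ tPer (mEval A B w) := by
    have h1 : permWeight (mEval A B w) 1 = ∑ v, mEval A B w v v :=
      Finset.sum_congr rfl (fun v _ => by simp)
    rw [← h1]
    exact Finset.le_sup (Finset.mem_univ 1)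
  have hup : ∑ v, pathW A B w (fun _ => v) = tPer (mEval A B w) := by
    apply le_antisymm (le_trans (Finset.sum_le_sum hc3) hc4)
    rw [hc1]
    exact hkey
  have hsumne : ∑ v, pathW A B w (fun _ => v) ≠ ⊥ := by rw [hup]; exact hperW
  have hdiag_eq : ∀ v : Fin n, pathW A B w (fun _ => v) = mEval A B w v v := by
    intro v
    refine trop_sum_eq_of_le_of_sum_le hc3 ?_ hsumne v (Finset.mem_univ v)
    calc ∑ v, mEval A B w v v ≤ tPer (mEval A B w) := hc4
      _ = ∑ v, pathW A B w (fun _ => v) := hup.symm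
  have hdiag_ne : ∀ v : Fin n, pathW A B w (fun _ => v) ≠ ⊥ := fun v =>
    trop_sum_ne_bot (f := fun v => pathW A B w (fun _ => v)) hsumne v (Finset.mem_univ v)
  -- extremal walk selection
  set S : Finset (Fin (w.length + 1) → Fin n) := Finset.univ.filter (fun F =>
    F 0 = i ∧ F (Fin.last w.length) = j ∧
    pathW A B w (toG w.length F) = mEval A B w i j) with hSdef
  have hSne : S.Nonempty := by
    obtain ⟨g0, hg00, hg0L, hg0w⟩ := pathW_exists A B w i j hij
    refine ⟨fun k => g0 k.val, Finset.mem_filter.mpr ⟨Finset.mem_univ _, hg00, hg0L, ?_⟩⟩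
    rw [pathW_congr A B w (toG w.length (fun k => g0 k.val)) g0 ?_]
    · exact hg0w
    · intro t htle
      rw [toG_eq w.length _ t htle]
  obtain ⟨F, hFS, hFmax⟩ := Finset.exists_max_image S
    (fun F => (Finset.univ.filter (fun k : Fin w.length => F k.castSucc = F k.succ)).card) hSne
  obtain ⟨-, hF0, hFlast, hFw⟩ := Finset.mem_filter.mp hFS
  set gs : ℕ → Fin n := toG w.length F with hgsdef
  have hgs0 : gs 0 = i := by
    rw [hgsdef, toG_eq w.length F 0 (Nat.zero_le _)]
    have : (⟨0, Nat.lt_succ_of_le (Nat.zero_le _)⟩ : Fin (w.length + 1)) = 0 := rfl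
    rw [this]; exact hF0
  have hgsL : gs w.length = j := by
    rw [hgsdef, toG_eq w.length F w.length le_rfl]
    exact hFlast
  have hcastS : ∀ k : Fin w.length, F k.castSucc = gs k.val := by
    intro k
    rw [hgsdef, toG_eq w.length F k.val k.isLt.le]
    exact congrArg F (Fin.ext (by simp))
  have hsuccS : ∀ k : Fin w.length, F k.succ = gs (k.val + 1) := by
    intro k
    rw [hgsdef, toG_eq w.length F (k.val + 1) k.isLt]
    exact congrArg F (Fin.ext (by simp))
  -- 1-cyclicity of the chosen walk
  have CYC : ∀ t1 m t2 : ℕ, t1 ≤ m → m ≤ t2 → t2 ≤ w.length →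
      gs t1 = gs t2 → gs m = gs t1 := by
    intro t1 m t2 h1m hm2 h2L heq
    by_contra hmne
    rcases eq_or_lt_of_le h1m with rfl | h1m'
    · exact hmne rfl
    rcases eq_or_lt_of_le hm2 with rfl | hm2'
    · exact hmne heq.symm
    have h12 : t1 ≤ t2 := by omega
    have h1L : t1 ≤ w.length := by omega
    have hw1len : (w.take t1).length = t1 := by
      rw [List.length_take]; exact min_eq_left h1L
    have hulen : ((w.drop t1).take (t2 - t1)).length = t2 - t1 := by
      rw [List.length_take, List.length_drop]; exact min_eq_left (by omega)
    have hw2len : (w.drop t2).length = w.length - t2 := List.length_drop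
    set v : Fin n := gs t1 with hvdef
    set g' : ℕ → Fin n := fun t => if t1 ≤ t ∧ t ≤ t2 then v else gs t with hg'def
    set h' : ℕ → Fin n := fun t => if t1 ≤ t ∧ t ≤ t2 then gs t else v with hh'def
    have hg'eval : ∀ s, g' s = if t1 ≤ s ∧ s ≤ t2 then v else gs s := fun s => rfl
    have hh'eval : ∀ s, h' s = if t1 ≤ s ∧ s ≤ t2 then gs s else v := fun s => rfl
    have hg'lo : ∀ s, s ≤ t1 → g' s = gs s := by
      intro s hs
      rw [hg'eval]
      by_cases hst : s = t1
      · subst hst; rw [if_pos ⟨le_rfl, h12⟩]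
      · rw [if_neg (by omega)]
    have hg'hi : ∀ s, t2 ≤ s → g' s = gs s := by
      intro s hs
      rw [hg'eval]
      by_cases hst : s = t2
      · subst hst
        rw [if_pos ⟨h12, le_rfl⟩]
        exact heq
      · rw [if_neg (by omega)]
    have hg'mid : ∀ s, t1 ≤ s → s ≤ t2 → g' s = v := by
      intro s hs1 hs2
      rw [hg'eval, if_pos ⟨hs1, hs2⟩]
    -- const v walk split
    have hcv_split : pathW A B w (fun _ => v) = pathW A B (w.take t1) (fun _ => v)
        + pathW A B ((w.drop t1).take (t2 - t1)) (fun _ => v)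
        + pathW A B (w.drop t2) (fun _ => v) := by
      rw [pathW_trisplit A B w t1 t2 h12 h2L (fun _ => v)]
    have hcv_ne : pathW A B (w.take t1) (fun _ => v) ≠ ⊥ ∧
        pathW A B ((w.drop t1).take (t2 - t1)) (fun _ => v) ≠ ⊥ ∧
        pathW A B (w.drop t2) (fun _ => v) ≠ ⊥ := by
      have h0 : pathW A B w (fun _ => v) ≠ ⊥ := hdiag_ne v
      rw [hcv_split] at h0
      rcases trop_add_ne_bot.mp h0 with ⟨h1, h3⟩
      rcases trop_add_ne_bot.mp h1 with ⟨h1a, h1b⟩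
      exact ⟨h1a, h1b, h3⟩
    -- closed-walk h' bound
    have hh'0 : h' 0 = v := by
      rw [hh'eval]
      by_cases ht10 : t1 = 0
      · rw [if_pos ⟨by omega, by omega⟩, ← ht10]
      · rw [if_neg (by omega)]
    have hh'L : h' w.length = v := by
      rw [hh'eval]
      by_cases ht2L : t2 = w.length
      · rw [if_pos ⟨by omega, by omega⟩, ← ht2L]
        exact heq.symm
      · rw [if_neg (by omega)]
    have hh'split : pathW A B w h' = pathW A B (w.take t1) (fun _ => v)
        + pathW A B ((w.drop t1).take (t2 - t1)) (fun s => gs (s + t1))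
        + pathW A B (w.drop t2) (fun _ => v) := by
      rw [pathW_trisplit A B w t1 t2 h12 h2L h']
      congr 1
      · congr 1
        · apply pathW_congr
          intro s hs
          rw [hw1len] at hs
          rw [hh'eval]
          by_cases hst : s = t1
          · subst hst; rw [if_pos ⟨le_rfl, h12⟩]
          · rw [if_neg (by omega)]
        · apply pathW_congr
          intro s hs
          rw [hulen] at hs
          rw [hh'eval, if_pos ⟨by omega, by omega⟩]
      · apply pathW_congr
        intro s hs
        rw [hw2len] at hs
        rw [hh'eval]
        by_cases hs0 : s = 0
        · subst hs0
          rw [if_pos ⟨by omega, by omega⟩, Nat.zero_add]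
          exact heq.symm
        · rw [if_neg (by omega)]
    have hclosed : pathW A B w h' ≤ pathW A B w (fun _ => v) := by
      rw [hdiag_eq v]
      exact pathW_le_mEval A B w h' v v hh'0 hh'L
    rw [hh'split, hcv_split] at hclosed
    have hmid : pathW A B ((w.drop t1).take (t2 - t1)) (fun s => gs (s + t1))
        ≤ pathW A B ((w.drop t1).take (t2 - t1)) (fun _ => v) :=
      trop_le_of_add_le_add_left hcv_ne.1
        (trop_le_of_add_le_add_right hcv_ne.2.2 hclosed)
    -- new walk g'
    have hg'0 : g' 0 = i := by
      by_cases ht10 : t1 = 0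
      · rw [hg'mid 0 (by omega) (by omega), hvdef, ht10]
        exact hgs0
      · rw [hg'lo 0 (by omega)]; exact hgs0
    have hg'L : g' w.length = j := by
      rw [hg'hi w.length h2L]; exact hgsL
    have hg'split : pathW A B w g' = pathW A B (w.take t1) gs
        + pathW A B ((w.drop t1).take (t2 - t1)) (fun _ => v)
        + pathW A B (w.drop t2) (fun s => gs (s + t2)) := by
      rw [pathW_trisplit A B w t1 t2 h12 h2L g']
      congr 1
      · congr 1
        · apply pathW_congr
          intro s hs
          rw [hw1len] at hs
          exact hg'lo s hs
        · apply pathW_congr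
          intro s hs
          rw [hulen] at hs
          exact hg'mid (s + t1) (by omega) (by omega)
      · apply pathW_congr
        intro s hs
        rw [hw2len] at hs
        exact hg'hi (s + t2) (by omega)
    have hgs_split : pathW A B w gs = pathW A B (w.take t1) gs
        + pathW A B ((w.drop t1).take (t2 - t1)) (fun s => gs (s + t1))
        + pathW A B (w.drop t2) (fun s => gs (s + t2)) :=
      pathW_trisplit A B w t1 t2 h12 h2L gs
    have hg'ge : pathW A B w gs ≤ pathW A B w g' := by
      rw [hgs_split, hg'split]
      exact add_le_add (add_le_add le_rfl hmid) le_rfl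
    have hg'W : pathW A B w g' = mEval A B w i j := by
      apply le_antisymm (pathW_le_mEval A B w g' i j hg'0 hg'L)
      rw [← hFw]
      exact hg'ge
    -- new candidate F'
    set F' : Fin (w.length + 1) → Fin n := fun k => g' k.val with hF'def
    have hF'S : F' ∈ S := by
      rw [hSdef]
      refine Finset.mem_filter.mpr ⟨Finset.mem_univ _, hg'0, hg'L, ?_⟩
      rw [pathW_congr A B w (toG w.length F') g' ?_]
      · exact hg'W
      · intro t htle
        rw [toG_eq w.length F' t htle]
    -- stays strictly increase
    have hcastS' : ∀ k : Fin w.length, F' k.castSucc = g' k.val := fun k => rfl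
    have hsuccS' : ∀ k : Fin w.length, F' k.succ = g' (k.val + 1) := fun k => rfl
    have harc : ∀ k : Fin w.length, F k.castSucc = F k.succ → F' k.castSucc = F' k.succ := by
      intro k hk
      rw [hcastS k, hsuccS k] at hk
      rw [hcastS' k, hsuccS' k]
      rcases (by omega : k.val + 1 ≤ t1 ∨ (t1 ≤ k.val ∧ k.val + 1 ≤ t2) ∨ t2 ≤ k.val) with
        h | h | h
      · rw [hg'lo k.val (by omega), hg'lo (k.val + 1) (by omega)]; exact hk
      · rw [hg'mid k.val (by omega) (by omega), hg'mid (k.val + 1) (by omega) (by omega)]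
      · rw [hg'hi k.val (by omega), hg'hi (k.val + 1) (by omega)]; exact hk
    have hexists : ∃ s0, t1 ≤ s0 ∧ s0 < m ∧ gs s0 ≠ gs (s0 + 1) := by
      by_contra hcon
      push_neg at hcon
      have hstep : ∀ d, t1 + d ≤ m → gs (t1 + d) = gs t1 := by
        intro d
        induction d with
        | zero => intro _; rfl
        | succ d ihd =>
          intro hdm
          have h1 : gs (t1 + d) = gs (t1 + d + 1) := hcon (t1 + d) (by omega) (by omega)
          have h2 : t1 + (d + 1) = t1 + d + 1 := by omega
          rw [h2, ← h1]
          exact ihd (by omega)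
      have hmm := hstep (m - t1) (by omega)
      rw [show t1 + (m - t1) = m by omega] at hmm
      exact hmne (hmm.trans hvdef.symm)
    obtain ⟨s0, hs1, hs2, hs3⟩ := hexists
    set k0 : Fin w.length := ⟨s0, by omega⟩ with hk0def
    have hk0F' : F' k0.castSucc = F' k0.succ := by
      rw [hcastS' k0, hsuccS' k0]
      show g' s0 = g' (s0 + 1)
      rw [hg'mid s0 (by omega) (by omega), hg'mid (s0 + 1) (by omega) (by omega)]
    have hk0F : ¬ (F k0.castSucc = F k0.succ) := by
      rw [hcastS k0, hsuccS k0]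
      exact hs3
    have hsub : (Finset.univ.filter (fun k : Fin w.length => F k.castSucc = F k.succ))
        ⊆ (Finset.univ.filter (fun k : Fin w.length => F' k.castSucc = F' k.succ)) := by
      intro k hk
      rw [Finset.mem_filter] at hk ⊢
      exact ⟨Finset.mem_univ _, harc k hk.2⟩
    have hss : (Finset.univ.filter (fun k : Fin w.length => F k.castSucc = F k.succ))
        ⊂ (Finset.univ.filter (fun k : Fin w.length => F' k.castSucc = F' k.succ)) := by
      rw [Finset.ssubset_iff_of_subset hsub]
      exact ⟨k0, Finset.mem_filter.mpr ⟨Finset.mem_univ _, hk0F'⟩, by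
        rw [Finset.mem_filter]; tauto⟩
    have hlt := Finset.card_lt_card hss
    have hle := hFmax F' hF'S
    omega

  -- final assembly
  have hFk : ∀ k : Fin (w.length + 1), gs k.val = F k := by
    intro k
    rw [hgsdef, toG_eq w.length F k.val (Nat.lt_succ_iff.mp k.isLt)]
  have hsumEq : ∑ k : Fin w.length, (if w.get k then A else B) (F k.castSucc) (F k.succ)
      = mEval A B w i j := by
    rw [← hFw, pathW_fin_sum]
    apply Finset.sum_congr rfl
    intro k _
    show letterM A B (w.get k) (F k.castSucc) (F k.succ) = letterM A B (w.get k) (gs k.val) (gs (k.val + 1))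
    rw [hcastS k, hsuccS k]
  refine ⟨F, hF0, hFlast, ?_, hsumEq, ?_⟩
  · intro k
    refine trop_sum_ne_bot (f := fun k : Fin w.length =>
      (if w.get k then A else B) (F k.castSucc) (F k.succ)) ?_ k (Finset.mem_univ k)
    rw [hsumEq]
    exact hij
  · intro k1 m k2 h1 h2 heqf
    have hc := CYC k1.val m.val k2.val h1 h2 (Nat.lt_succ_iff.mp k2.isLt) ?_
    · rw [hFk k1, hFk m] at hc
      exact hc
    · rw [hFk k1, hFk k2]
      exact heqf
end
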